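/- (Pointwise form of Lemma 2.3.) Let I ∈ M_n(ℂ) be a unitary matrix, let f : 𝕋 → M_n(ℂ) admit a right canonical factorization datum (f₋, f₊), define g : 𝕋 → M_n(ℂ) by g(z) = I · f(z̄) · I*, and let (g₊, g₋) be any left canonical factorization datum for g. Then for every w in the closed unit disk 𝔻̄, g₊(w̄) · g₋(w) = I · (f₋(w̄) · f₊(w)) · I*. In other words, the exterior extension of g at the point 1/w equals I times the interior extension of f at w times I*, so that the canonical extensions intertwine the inversion symmetry I and the involution z ↦ z⁻¹ of the Riemann sphere. -/

import Mathlib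

open Complex Matrix

/-- The closed unit disk in `ℂ`. -/
def closedDisk : Set ℂ := {z : ℂ | ‖z‖ ≤ 1}

/-- The open unit disk in `ℂ`. -/
def openDisk : Set ℂ := {z : ℂ | ‖z‖ < 1}

/-- A right canonical factorization datum for `f : 𝕋 → Mₙ(ℂ)`: a pair `(fm, fp)` of maps on the
closed unit disk, continuous there, holomorphic on the open disk, taking invertible values, with
`f z = fm z̄ * fp z` on the unit circle. -/
structure RightCanonicalFactorizationDatum (n : ℕ)
    (f fm fp : ℂ → Matrix (Fin n) (Fin n) ℂ) : Prop where
  cont_m : ContinuousOn fm closedDisk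
  cont_p : ContinuousOn fp closedDisk
  hol_m : ∀ i j, DifferentiableOn ℂ (fun z => fm z i j) openDisk
  hol_p : ∀ i j, DifferentiableOn ℂ (fun z => fp z i j) openDisk
  unit_m : ∀ z ∈ closedDisk, IsUnit (fm z)
  unit_p : ∀ z ∈ closedDisk, IsUnit (fp z)
  factor : ∀ z : ℂ, ‖z‖ = 1 → f z = fm (starRingEnd ℂ z) * fp z

/-- A left canonical factorization datum for `f : 𝕋 → Mₙ(ℂ)`: a pair `(gp, gm)` of maps on the
closed unit disk, continuous there, holomorphic on the open disk, taking invertible values, with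
`f z = gp z * gm z̄` on the unit circle. -/
structure LeftCanonicalFactorizationDatum (n : ℕ)
    (f gp gm : ℂ → Matrix (Fin n) (Fin n) ℂ) : Prop where
  cont_p : ContinuousOn gp closedDisk
  cont_m : ContinuousOn gm closedDisk
  hol_p : ∀ i j, DifferentiableOn ℂ (fun z => gp z i j) openDisk
  hol_m : ∀ i j, DifferentiableOn ℂ (fun z => gm z i j) openDisk
  unit_p : ∀ z ∈ closedDisk, IsUnit (gp z)
  unit_m : ∀ z ∈ closedDisk, IsUnit (gm z)
  factor : ∀ z : ℂ, ‖z‖ = 1 → f z = gp z * gm (starRingEnd ℂ z)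


lemma openDisk_eq : openDisk = Metric.ball (0 : ℂ) 1 := by
  ext z; simp [openDisk, Metric.mem_ball, dist_zero_right]

lemma closedDisk_eq : closedDisk = Metric.closedBall (0 : ℂ) 1 := by
  ext z; simp [closedDisk, Metric.mem_closedBall, dist_zero_right]

lemma openDisk_subset : openDisk ⊆ closedDisk := fun _ hz => show ‖_‖ ≤ 1 from le_of_lt hz

lemma conj_mem_closedDisk {z : ℂ} (hz : z ∈ closedDisk) :
    (starRingEnd ℂ) z ∈ closedDisk := by
  simpa [closedDisk, RCLike.norm_conj] using hz

lemma conj_mem_openDisk {z : ℂ} (hz : z ∈ openDisk) :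
    (starRingEnd ℂ) z ∈ openDisk := by
  simpa [openDisk, RCLike.norm_conj] using hz

/-- Derivative of the "double conjugate" of a holomorphic function. -/
lemma hasDerivAt_conj_conj {b : ℂ → ℂ} {b' z : ℂ}
    (h : HasDerivAt b b' ((starRingEnd ℂ) z)) :
    HasDerivAt (fun w => (starRingEnd ℂ) (b ((starRingEnd ℂ) w)))
      ((starRingEnd ℂ) b') z := by
  rw [hasDerivAt_iff_isLittleO] at h ⊢
  have hc : Filter.Tendsto (fun w : ℂ => (starRingEnd ℂ) w) (nhds z)
      (nhds ((starRingEnd ℂ) z)) := Complex.continuous_conj.tendsto z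
  have h2 := (h.comp_tendsto hc).norm_norm
  refine Asymptotics.IsLittleO.of_norm_norm ?_
  have e1 : (fun w : ℂ => ‖(starRingEnd ℂ) (b ((starRingEnd ℂ) w)) -
      (starRingEnd ℂ) (b ((starRingEnd ℂ) z)) - (w - z) • (starRingEnd ℂ) b'‖) =
      fun w : ℂ => ‖b ((starRingEnd ℂ) w) - b ((starRingEnd ℂ) z) -
      ((starRingEnd ℂ) w - (starRingEnd ℂ) z) • b'‖ := by
    funext w
    have : (starRingEnd ℂ) (b ((starRingEnd ℂ) w)) -
        (starRingEnd ℂ) (b ((starRingEnd ℂ) z)) - (w - z) • (starRingEnd ℂ) b' =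
        (starRingEnd ℂ) (b ((starRingEnd ℂ) w) - b ((starRingEnd ℂ) z) -
        ((starRingEnd ℂ) w - (starRingEnd ℂ) z) • b') := by
      simp only [smul_eq_mul, map_sub, _root_.map_mul, Complex.conj_conj]
    rw [this, RCLike.norm_conj]
  have e2 : (fun w : ℂ => ‖w - z‖) =
      fun w : ℂ => ‖(starRingEnd ℂ) w - (starRingEnd ℂ) z‖ := by
    funext w; rw [← map_sub, RCLike.norm_conj]
  rw [e1, e2]
  exact h2

lemma diffOn_conj_conj {b : ℂ → ℂ} (hb : DifferentiableOn ℂ b openDisk) :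
    DifferentiableOn ℂ (fun w => (starRingEnd ℂ) (b ((starRingEnd ℂ) w))) openDisk := by
  have hopen : IsOpen openDisk := by rw [openDisk_eq]; exact Metric.isOpen_ball
  intro z hz
  have hz' := conj_mem_openDisk hz
  have hd : DifferentiableAt ℂ b ((starRingEnd ℂ) z) :=
    hb.differentiableAt (hopen.mem_nhds hz')
  exact ((hasDerivAt_conj_conj hd.hasDerivAt).differentiableAt).differentiableWithinAt

lemma contOn_conj_conj {b : ℂ → ℂ} (hb : ContinuousOn b closedDisk) :
    ContinuousOn (fun w => (starRingEnd ℂ) (b ((starRingEnd ℂ) w))) closedDisk := by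
  apply Complex.continuous_conj.comp_continuousOn
  exact hb.comp Complex.continuous_conj.continuousOn fun z hz => conj_mem_closedDisk hz

/-- Maximum modulus: a function with vanishing boundary real part has vanishing real part. -/
lemma re_eq_zero_of_boundary {s : ℂ → ℂ}
    (hc : ContinuousOn s closedDisk) (hd : DifferentiableOn ℂ s openDisk)
    (hb : ∀ z : ℂ, ‖z‖ = 1 → (s z).re = 0) :
    ∀ z ∈ closedDisk, (s z).re = 0 := by
  have key : ∀ t : ℂ → ℂ, ContinuousOn t closedDisk → DifferentiableOn ℂ t openDisk →
      (∀ z : ℂ, ‖z‖ = 1 → (t z).re = 0) → ∀ z ∈ closedDisk, Real.exp ((t z).re) ≤ 1 := by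
    intro t htc htd htb z hz
    have hd' : DiffContOnCl ℂ (fun w => Complex.exp (t w)) (Metric.ball (0 : ℂ) 1) := by
      constructor
      · have := htd.cexp; rwa [openDisk_eq] at this
      · rw [closure_ball (0 : ℂ) one_ne_zero, ← closedDisk_eq]; exact htc.cexp
    have hmem : z ∈ closure (Metric.ball (0 : ℂ) 1) := by
      rw [closure_ball (0 : ℂ) one_ne_zero, ← closedDisk_eq]; exact hz
    have := Complex.norm_le_of_forall_mem_frontier_norm_le (C := 1) Metric.isBounded_ball hd'
      (fun w hw => by
        rw [frontier_ball (0 : ℂ) one_ne_zero] at hw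
        have hw' : ‖w‖ = 1 := by simpa using mem_sphere_zero_iff_norm.mp hw
        simp [Complex.norm_exp, htb w hw']) hmem
    simpa [Complex.norm_exp] using this
  intro z hz
  have h1 := key s hc hd hb z hz
  have h2 := key (fun w => -(s w)) hc.neg hd.neg (fun w hw => by simp [hb w hw]) z hz
  rw [Real.exp_le_one_iff] at h1
  simp only [Complex.neg_re, Real.exp_le_one_iff, neg_nonpos] at h2
  linarith

/-- Boundary rigidity: if `a z = b z̄` on the circle then on the whole closed disk. -/
lemma boundary_rigidity {a b : ℂ → ℂ}
    (hac : ContinuousOn a closedDisk) (had : DifferentiableOn ℂ a openDisk)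
    (hbc : ContinuousOn b closedDisk) (hbd : DifferentiableOn ℂ b openDisk)
    (hab : ∀ z : ℂ, ‖z‖ = 1 → a z = b (starRingEnd ℂ z)) :
    ∀ z ∈ closedDisk, a z = b (starRingEnd ℂ z) := by
  set ψ : ℂ → ℂ := fun w => (starRingEnd ℂ) (b ((starRingEnd ℂ) w)) with hψ
  have hψc : ContinuousOn ψ closedDisk := contOn_conj_conj hbc
  have hψd : DifferentiableOn ℂ ψ openDisk := diffOn_conj_conj hbd
  have haψ : ∀ z : ℂ, ‖z‖ = 1 → a z = (starRingEnd ℂ) (ψ z) := by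
    intro z hz; rw [hab z hz, hψ]; simp
  have hd0 : ∀ z ∈ closedDisk, (a z - ψ z).re = 0 := by
    apply re_eq_zero_of_boundary (hac.sub hψc) (had.sub hψd)
    intro z hz
    rw [Pi.sub_apply, Complex.sub_re, haψ z hz]
    simp
  have hs0 : ∀ z ∈ closedDisk, (Complex.I * (a z + ψ z)).re = 0 := by
    apply re_eq_zero_of_boundary
    · exact continuousOn_const.mul (hac.add hψc)
    · exact (differentiableOn_const _).mul (had.add hψd)
    · intro z hz
      rw [haψ z hz]
      simp [Complex.mul_re]
  intro z hz
  have h1 := hd0 z hz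
  have h2 := hs0 z hz
  have hbz : b ((starRingEnd ℂ) z) = (starRingEnd ℂ) (ψ z) := by rw [hψ]; simp
  rw [hbz]
  simp only [Complex.sub_re] at h1
  simp only [Complex.mul_re, Complex.I_re, Complex.I_im, Complex.add_im, Complex.add_re,
    zero_mul, one_mul, zero_sub, neg_eq_zero] at h2
  apply Complex.ext
  · simpa using by linarith
  · simp only [Complex.conj_im]; linarith

section MatrixHelpers

variable {n : ℕ} {s : Set ℂ}

lemma det_diffOn {M : ℂ → Matrix (Fin n) (Fin n) ℂ}
    (h : ∀ i j, DifferentiableOn ℂ (fun z => M z i j) s) :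
    DifferentiableOn ℂ (fun z => (M z).det) s := by
  simp only [Matrix.det_apply']
  exact DifferentiableOn.fun_sum fun σ _ =>
    ((DifferentiableOn.fun_finsetProd fun i _ => h (σ i) i).const_mul _)

lemma det_contOn {M : ℂ → Matrix (Fin n) (Fin n) ℂ}
    (h : ∀ i j, ContinuousOn (fun z => M z i j) s) :
    ContinuousOn (fun z => (M z).det) s := by
  simp only [Matrix.det_apply']
  exact continuousOn_finset_sum _ fun σ _ =>
    continuousOn_const.mul (continuousOn_finset_prod _ fun i _ => h (σ i) i)

lemma inv_entry_diffOn {M : ℂ → Matrix (Fin n) (Fin n) ℂ}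
    (h : ∀ i j, DifferentiableOn ℂ (fun z => M z i j) s)
    (hu : ∀ z ∈ s, IsUnit (M z)) :
    ∀ i j, DifferentiableOn ℂ (fun z => (M z)⁻¹ i j) s := by
  intro i j
  have hne : ∀ z ∈ s, (M z).det ≠ 0 := fun z hz =>
    ((Matrix.isUnit_iff_isUnit_det _).mp (hu z hz)).ne_zero
  have hadj : DifferentiableOn ℂ (fun z => (M z).adjugate i j) s := by
    simp only [Matrix.adjugate_apply]
    apply det_diffOn
    intro k l
    simp only [Matrix.updateRow_apply]
    by_cases hk : k = j
    · simp only [if_pos hk]; exact differentiableOn_const _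
    · simp only [if_neg hk]; exact h k l
  have he : (fun z => (M z)⁻¹ i j) = fun z => ((M z).det)⁻¹ * (M z).adjugate i j := by
    funext z
    rw [Matrix.inv_def, Matrix.smul_apply, Ring.inverse_eq_inv', smul_eq_mul]
  rw [he]
  exact ((det_diffOn h).inv hne).mul hadj

lemma inv_entry_contOn {M : ℂ → Matrix (Fin n) (Fin n) ℂ}
    (h : ∀ i j, ContinuousOn (fun z => M z i j) s)
    (hu : ∀ z ∈ s, IsUnit (M z)) :
    ∀ i j, ContinuousOn (fun z => (M z)⁻¹ i j) s := by
  intro i j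
  have hne : ∀ z ∈ s, (M z).det ≠ 0 := fun z hz =>
    ((Matrix.isUnit_iff_isUnit_det _).mp (hu z hz)).ne_zero
  have hadj : ContinuousOn (fun z => (M z).adjugate i j) s := by
    simp only [Matrix.adjugate_apply]
    apply det_contOn
    intro k l
    simp only [Matrix.updateRow_apply]
    by_cases hk : k = j
    · simp only [if_pos hk]; exact continuousOn_const
    · simp only [if_neg hk]; exact h k l
  have he : (fun z => (M z)⁻¹ i j) = fun z => ((M z).det)⁻¹ * (M z).adjugate i j := by
    funext z
    rw [Matrix.inv_def, Matrix.smul_apply, Ring.inverse_eq_inv', smul_eq_mul]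
  rw [he]
  exact ((det_contOn h).inv₀ hne).mul hadj

lemma mul_entry_diffOn {A B : ℂ → Matrix (Fin n) (Fin n) ℂ}
    (hA : ∀ i j, DifferentiableOn ℂ (fun z => A z i j) s)
    (hB : ∀ i j, DifferentiableOn ℂ (fun z => B z i j) s) :
    ∀ i j, DifferentiableOn ℂ (fun z => (A z * B z) i j) s := by
  intro i j
  simp only [Matrix.mul_apply]
  exact DifferentiableOn.fun_sum fun k _ => (hA i k).mul (hB k j)

lemma mul_entry_contOn {A B : ℂ → Matrix (Fin n) (Fin n) ℂ}
    (hA : ∀ i j, ContinuousOn (fun z => A z i j) s)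
    (hB : ∀ i j, ContinuousOn (fun z => B z i j) s) :
    ∀ i j, ContinuousOn (fun z => (A z * B z) i j) s := by
  intro i j
  simp only [Matrix.mul_apply]
  exact continuousOn_finset_sum _ fun k _ => (hA i k).mul (hB k j)

lemma entry_contOn {M : ℂ → Matrix (Fin n) (Fin n) ℂ} (h : ContinuousOn M s) :
    ∀ i j, ContinuousOn (fun z => M z i j) s := fun i j => by
  exact
    (((continuous_apply j).comp (continuous_apply i)).comp_continuousOn h)

end MatrixHelpers

/-- Matrix valued boundary rigidity. -/
lemma boundary_rigidity_matrix {n : ℕ} {A B : ℂ → Matrix (Fin n) (Fin n) ℂ}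
    (hAc : ∀ i j, ContinuousOn (fun z => A z i j) closedDisk)
    (hAd : ∀ i j, DifferentiableOn ℂ (fun z => A z i j) openDisk)
    (hBc : ∀ i j, ContinuousOn (fun z => B z i j) closedDisk)
    (hBd : ∀ i j, DifferentiableOn ℂ (fun z => B z i j) openDisk)
    (hab : ∀ z : ℂ, ‖z‖ = 1 → A z = B (starRingEnd ℂ z)) :
    ∀ z ∈ closedDisk, A z = B (starRingEnd ℂ z) := by
  intro z hz
  ext i j
  exact boundary_rigidity (hAc i j) (hAd i j) (hBc i j) (hBd i j)
    (fun w hw => by rw [hab w hw]) z hz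

/-- Pointwise form of Lemma 2.3: the canonical extensions intertwine the inversion symmetry `I`
and the involution `z ↦ z⁻¹` of the Riemann sphere.  If `g(z) = I f(z̄) I*` on the circle, then
the exterior extension of `g` equals `I (interior extension of f) I*`. -/
theorem extensions_intertwine_inversion_symmetry
    {n : ℕ} (hn : 1 ≤ n) (Iop : Matrix (Fin n) (Fin n) ℂ)
    (hI1 : Iop * Iopᴴ = 1) (hI2 : Iopᴴ * Iop = 1)
    (f fm fp g gp gm : ℂ → Matrix (Fin n) (Fin n) ℂ)
    (hf : RightCanonicalFactorizationDatum n f fm fp)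
    (hgdef : ∀ z : ℂ, ‖z‖ = 1 → g z = Iop * f (starRingEnd ℂ z) * Iopᴴ)
    (hg : LeftCanonicalFactorizationDatum n g gp gm) :
    ∀ w ∈ closedDisk,
      gp (starRingEnd ℂ w) * gm w = Iop * (fm (starRingEnd ℂ w) * fp w) * Iopᴴ := by
  classical
  -- cancellation helpers
  have lcancel : ∀ (M X Y : Matrix (Fin n) (Fin n) ℂ), IsUnit M → M * X = M * Y → X = Y := by
    intro M X Y hM h
    have hMd := (Matrix.isUnit_iff_isUnit_det M).mp hM
    have := congrArg (fun Z => M⁻¹ * Z) h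
    simpa [Matrix.nonsing_inv_mul_cancel_left _ _ hMd] using this
  have rcancel : ∀ (M X Y : Matrix (Fin n) (Fin n) ℂ), IsUnit M → X * M = Y * M → X = Y := by
    intro M X Y hM h
    have hMd := (Matrix.isUnit_iff_isUnit_det M).mp hM
    have := congrArg (fun Z => Z * M⁻¹) h
    simpa [Matrix.mul_nonsing_inv_cancel_right _ _ hMd] using this
  set A : ℂ → Matrix (Fin n) (Fin n) ℂ := fun z => (fm z)⁻¹ * (Iopᴴ * gp z) with hA
  set B : ℂ → Matrix (Fin n) (Fin n) ℂ := fun z => fp z * (Iopᴴ * (gm z)⁻¹) with hB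
  have huo : ∀ z ∈ openDisk, IsUnit (fm z) := fun z hz => hf.unit_m z (openDisk_subset hz)
  have hgo : ∀ z ∈ openDisk, IsUnit (gm z) := fun z hz => hg.unit_m z (openDisk_subset hz)
  have hconstC : ∀ (C : Matrix (Fin n) (Fin n) ℂ) (i j : Fin n),
      ContinuousOn (fun _ : ℂ => C i j) closedDisk := fun _ _ _ => continuousOn_const
  have hconstD : ∀ (C : Matrix (Fin n) (Fin n) ℂ) (i j : Fin n),
      DifferentiableOn ℂ (fun _ : ℂ => C i j) openDisk := fun _ _ _ => differentiableOn_const _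
  have hAc : ∀ i j, ContinuousOn (fun z => A z i j) closedDisk :=
    mul_entry_contOn (inv_entry_contOn (entry_contOn hf.cont_m) hf.unit_m)
      (mul_entry_contOn (hconstC Iopᴴ) (entry_contOn hg.cont_p))
  have hAd : ∀ i j, DifferentiableOn ℂ (fun z => A z i j) openDisk :=
    mul_entry_diffOn (inv_entry_diffOn hf.hol_m huo)
      (mul_entry_diffOn (hconstD Iopᴴ) hg.hol_p)
  have hBc : ∀ i j, ContinuousOn (fun z => B z i j) closedDisk :=
    mul_entry_contOn (entry_contOn hf.cont_p)
      (mul_entry_contOn (hconstC Iopᴴ) (inv_entry_contOn (entry_contOn hg.cont_m) hg.unit_m))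
  have hBd : ∀ i j, DifferentiableOn ℂ (fun z => B z i j) openDisk :=
    mul_entry_diffOn hf.hol_p
      (mul_entry_diffOn (hconstD Iopᴴ) (inv_entry_diffOn hg.hol_m hgo))
  -- boundary identity
  have hbdry : ∀ z : ℂ, ‖z‖ = 1 → A z = B (starRingEnd ℂ z) := by
    intro z hz
    have hz' : ‖(starRingEnd ℂ) z‖ = 1 := by rw [RCLike.norm_conj]; exact hz
    have hzm : z ∈ closedDisk := le_of_eq hz
    have hzm' : (starRingEnd ℂ) z ∈ closedDisk := le_of_eq hz'
    have hfac : f ((starRingEnd ℂ) z) = fm z * fp ((starRingEnd ℂ) z) := by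
      have := hf.factor ((starRingEnd ℂ) z) hz'
      rwa [Complex.conj_conj] at this
    have h1 : gp z * gm ((starRingEnd ℂ) z) = Iop * (fm z * fp ((starRingEnd ℂ) z)) * Iopᴴ := by
      rw [← hg.factor z hz, hgdef z hz, hfac]
    have hfmu := hf.unit_m z hzm
    have hgmu := hg.unit_m ((starRingEnd ℂ) z) hzm'
    have hfmd := (Matrix.isUnit_iff_isUnit_det _).mp hfmu
    have hgmd := (Matrix.isUnit_iff_isUnit_det _).mp hgmu
    apply lcancel (fm z) _ _ hfmu
    apply rcancel (gm ((starRingEnd ℂ) z)) _ _ hgmu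
    rw [hA, hB]
    simp only [Matrix.mul_nonsing_inv_cancel_left _ _ hfmd]
    calc Iopᴴ * gp z * gm ((starRingEnd ℂ) z)
        = Iopᴴ * (gp z * gm ((starRingEnd ℂ) z)) := by rw [Matrix.mul_assoc]
      _ = Iopᴴ * (Iop * (fm z * fp ((starRingEnd ℂ) z)) * Iopᴴ) := by rw [h1]
      _ = (Iopᴴ * Iop) * (fm z * fp ((starRingEnd ℂ) z)) * Iopᴴ := by
          simp only [Matrix.mul_assoc]
      _ = fm z * fp ((starRingEnd ℂ) z) * Iopᴴ := by rw [hI2, Matrix.one_mul]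
      _ = fm z * (fp ((starRingEnd ℂ) z) * (Iopᴴ * (gm ((starRingEnd ℂ) z))⁻¹)) *
            gm ((starRingEnd ℂ) z) := by
          simp only [Matrix.mul_assoc, Matrix.nonsing_inv_mul_cancel_right _ _ hgmd]
  have hmain := boundary_rigidity_matrix hAc hAd hBc hBd hbdry
  intro w hw
  have hw' : (starRingEnd ℂ) w ∈ closedDisk := conj_mem_closedDisk hw
  have hAB : A ((starRingEnd ℂ) w) = B w := by
    have := hmain ((starRingEnd ℂ) w) hw'
    rwa [Complex.conj_conj] at this
  have hfmu := hf.unit_m ((starRingEnd ℂ) w) hw'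
  have hgmu := hg.unit_m w hw
  have hfmd := (Matrix.isUnit_iff_isUnit_det _).mp hfmu
  have hgmd := (Matrix.isUnit_iff_isUnit_det _).mp hgmu
  have e1 : gp ((starRingEnd ℂ) w) = Iop * (fm ((starRingEnd ℂ) w) * A ((starRingEnd ℂ) w)) := by
    rw [hA]
    simp only [Matrix.mul_nonsing_inv_cancel_left _ _ hfmd, ← Matrix.mul_assoc, hI1,
      Matrix.one_mul]
  have e2 : B w * gm w = fp w * Iopᴴ := by
    rw [hB]
    simp only [Matrix.mul_assoc, Matrix.nonsing_inv_mul_cancel_right _ _ hgmd]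
  calc gp ((starRingEnd ℂ) w) * gm w
      = Iop * (fm ((starRingEnd ℂ) w) * A ((starRingEnd ℂ) w)) * gm w := by rw [e1]
    _ = Iop * (fm ((starRingEnd ℂ) w) * (B w * gm w)) := by rw [hAB]; simp only [Matrix.mul_assoc]
    _ = Iop * (fm ((starRingEnd ℂ) w) * (fp w * Iopᴴ)) := by rw [e2]
    _ = Iop * (fm ((starRingEnd ℂ) w) * fp w) * Iopᴴ := by simp only [Matrix.mul_assoc]
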